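/- Let X₁, X₂ be Banach spaces, U⃖_{t,s} a strongly continuous uniformly bounded forward evolution family in L(X₁), U⃗_{t,s} a strongly continuous uniformly bounded backward evolution family in L(X₂), Q₁₂ : [0,T] → L(X₁,X₂) and Q₁ : [0,T] → L(X₁) strongly continuous, and Ω⃖_{t,s} the unique strongly continuous uniformly bounded forward evolution family satisfying Ω⃖_{t,s} = U⃖_{t,s} − ∫_s^t Ω⃖_{t,r} Q₁(r) U⃖_{r,s} dr. Then for every G ∈ L(X₁,X₂), the function P(t) = U⃗_{t,T} G Ω⃖_{T,t} + ∫_t^T U⃗_{t,r} Q₁₂(r) Ω⃖_{r,t} dr is the unique strongly continuous solution of the linear integral equation P(t) = U⃗_{t,T} G U⃖_{T,t} + ∫_t^T U⃗_{t,r}[Q₁₂(r) − P(r)Q₁(r)] U⃖_{r,t} dr. -/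

import Mathlib

open MeasureTheory intervalIntegral Set Filter Topology

section AuxLemmas

variable {Y Z : Type*} [NormedAddCommGroup Y] [NormedSpace ℝ Y]
  [NormedAddCommGroup Z] [NormedSpace ℝ Z]

/-- Composition of a uniformly bounded, strongly continuous operator family with a
continuous vector-valued function is continuous. -/
lemma sc_comp {ι : Type*} [TopologicalSpace ι] {s : Set ι} {A : ι → Y →L[ℝ] Z} {M : ℝ}
    (hM : ∀ i ∈ s, ‖A i‖ ≤ M)
    (hA : ∀ y : Y, ContinuousOn (fun i => A i y) s)
    {f : ι → Y} (hf : ContinuousOn f s) :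
    ContinuousOn (fun i => A i (f i)) s := by
  intro i₀ hi₀
  have t1 : Tendsto (fun i => A i (f i - f i₀)) (𝓝[s] i₀) (𝓝 0) := by
    have hf' : Tendsto f (𝓝[s] i₀) (𝓝 (f i₀)) := hf i₀ hi₀
    have hf0 : Tendsto (fun i => ‖f i - f i₀‖) (𝓝[s] i₀) (𝓝 0) := by
      have := Filter.Tendsto.sub hf' (tendsto_const_nhds (x := f i₀))
      simpa using this.norm
    apply squeeze_zero_norm' (a := fun i => max M 0 * ‖f i - f i₀‖)
    · filter_upwards [self_mem_nhdsWithin] with i hi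
      calc ‖A i (f i - f i₀)‖ ≤ ‖A i‖ * ‖f i - f i₀‖ := (A i).le_opNorm _
        _ ≤ max M 0 * ‖f i - f i₀‖ := by
            have := hM i hi
            gcongr
            exact le_max_of_le_left this
    · simpa using hf0.const_mul (max M 0)
  have t2 : Tendsto (fun i => A i (f i₀) - A i₀ (f i₀)) (𝓝[s] i₀) (𝓝 0) := by
    have hA' : Tendsto (fun i => A i (f i₀)) (𝓝[s] i₀) (𝓝 (A i₀ (f i₀))) := hA (f i₀) i₀ hi₀
    have := Filter.Tendsto.sub hA' (tendsto_const_nhds (x := A i₀ (f i₀)))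
    simpa using this
  have t3 : Tendsto (fun i => A i (f i) - A i₀ (f i₀)) (𝓝[s] i₀) (𝓝 0) := by
    have := t1.add t2
    simp only [add_zero] at this
    refine this.congr (fun i => ?_)
    simp only [map_sub]
    abel
  have := t3.add (tendsto_const_nhds (x := A i₀ (f i₀)))
  simp only [zero_add] at this
  refine ContinuousWithinAt.congr ?_ (fun i _ => rfl) rfl
  exact this.congr (fun i => by abel)

/-- Uniform bound from strong continuity on a compact set (Banach–Steinhaus). -/
lemma sc_bound [CompleteSpace Y] {s : Set ℝ} (hs : IsCompact s) {A : ℝ → Y →L[ℝ] Z}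
    (hA : ∀ y : Y, ContinuousOn (fun t => A t y) s) :
    ∃ M : ℝ, 0 ≤ M ∧ ∀ t ∈ s, ‖A t‖ ≤ M := by
  have h : ∀ y : Y, ∃ C, ∀ i : s, ‖A i y‖ ≤ C := by
    intro y
    obtain ⟨C, hC⟩ := hs.exists_bound_of_continuousOn (hA y)
    exact ⟨C, fun i => hC i i.2⟩
  obtain ⟨C', hC'⟩ := banach_steinhaus h
  exact ⟨max C' 0, le_max_right _ _, fun t ht => le_max_of_le_left (hC' ⟨t, ht⟩)⟩

lemma IntervalIntegrable.congr_Icc {E : Type*} [NormedAddCommGroup E]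
    {f g : ℝ → E} {a b : ℝ} (hab : a ≤ b)
    (hf : IntervalIntegrable f volume a b) (h : ∀ x ∈ Set.Icc a b, f x = g x) :
    IntervalIntegrable g volume a b := by
  rw [intervalIntegrable_iff_integrableOn_Ioc_of_le hab] at hf ⊢
  refine hf.congr ?_
  filter_upwards [ae_restrict_mem measurableSet_Ioc] with x hx
  exact h x (Set.Ioc_subset_Icc_self hx)

end AuxLemmas

section Aux2

variable {E : Type*} [NormedAddCommGroup E] [NormedSpace ℝ E]

/-- Continuity of `t ↦ ∫_t^T h t r dr` for a parametrized integrand, via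
dominated convergence. -/
lemma param_cont {T : ℝ} (hT : 0 ≤ T) {h : ℝ → ℝ → E} {C : ℝ} (hC : 0 ≤ C)
    (hb : ∀ t r : ℝ, 0 ≤ t → t ≤ r → r ≤ T → ‖h t r‖ ≤ C)
    (hc₁ : ∀ t ∈ Set.Icc (0:ℝ) T, ContinuousOn (h t) (Set.Icc t T))
    (hc₂ : ∀ r ∈ Set.Ioc (0:ℝ) T, ContinuousOn (fun t => h t r) (Set.Icc 0 T ∩ Set.Iio r)) :
    ContinuousOn (fun t => ∫ r in t..T, h t r) (Set.Icc 0 T) := by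
  set μ := volume.restrict (Set.Ioc (0:ℝ) T) with hμ
  haveI hfin : IsFiniteMeasure μ := ⟨by
    rw [hμ, Measure.restrict_apply_univ]; exact measure_Ioc_lt_top⟩
  set F : ℝ → ℝ → E := fun t r => (Set.Ioc t T).indicator (h t) r with hF
  have hrr : ∀ t ∈ Set.Icc (0:ℝ) T, μ.restrict (Set.Ioc t T) = volume.restrict (Set.Ioc t T) := by
    intro t ht
    rw [hμ, Measure.restrict_restrict measurableSet_Ioc,
      Set.inter_eq_left.mpr (Set.Ioc_subset_Ioc_left ht.1)]
  have hmem : ∀ t ∈ Set.Icc (0:ℝ) T, (∫ r in t..T, h t r) = ∫ r, F t r ∂μ := by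
    intro t ht
    rw [intervalIntegral.integral_of_le ht.2, hF]
    rw [MeasureTheory.integral_indicator measurableSet_Ioc, hrr t ht]
  have hmeas : ∀ t ∈ Set.Icc (0:ℝ) T, AEStronglyMeasurable (F t) μ := by
    intro t ht
    rw [hF]
    rw [aestronglyMeasurable_indicator_iff measurableSet_Ioc, hrr t ht]
    exact ((hc₁ t ht).mono Set.Ioc_subset_Icc_self).aestronglyMeasurable measurableSet_Ioc
  intro t₀ ht₀
  have key : Tendsto (fun t => ∫ r, F t r ∂μ) (𝓝[Set.Icc (0:ℝ) T] t₀) (𝓝 (∫ r, F t₀ r ∂μ)) := by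
    apply MeasureTheory.tendsto_integral_filter_of_dominated_convergence (fun _ => C)
    · filter_upwards [self_mem_nhdsWithin] with t ht
      exact hmeas t ht
    · filter_upwards [self_mem_nhdsWithin] with t ht
      refine Filter.Eventually.of_forall (fun r => ?_)
      by_cases hr : r ∈ Set.Ioc t T
      · rw [hF]; simp only [Set.indicator_of_mem hr]
        exact hb t r ht.1 hr.1.le hr.2
      · rw [hF]; simp only [Set.indicator_of_notMem hr, norm_zero]; exact hC
    · exact integrable_const C
    · have hae : ∀ᵐ r ∂μ, r ∈ Set.Ioc (0:ℝ) T := ae_restrict_mem measurableSet_Ioc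
      have hne : ∀ᵐ r ∂μ, r ≠ t₀ := by
        rw [ae_iff]
        have hsub : {r : ℝ | ¬ r ≠ t₀} = {t₀} := by ext r; simp
        rw [hsub, hμ, Measure.restrict_apply' measurableSet_Ioc]
        exact measure_mono_null Set.inter_subset_left (measure_singleton t₀)
      filter_upwards [hae, hne] with r hr hrne
      rcases lt_or_gt_of_ne hrne with hlt | hgt
      · -- r < t₀ : eventually F t r = 0
        have hev : ∀ᶠ t in 𝓝[Set.Icc (0:ℝ) T] t₀, F t r = F t₀ r := by
          have : Set.Ioi r ∈ 𝓝[Set.Icc (0:ℝ) T] t₀ :=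
            nhdsWithin_le_nhds (Ioi_mem_nhds hlt)
          filter_upwards [this] with t htr
          have h1 : r ∉ Set.Ioc t T := fun hmem => absurd hmem.1 (not_lt.mpr (le_of_lt htr))
          have h2 : r ∉ Set.Ioc t₀ T := fun hmem => absurd hmem.1 (not_lt.mpr (le_of_lt hlt))
          rw [hF]; simp only [Set.indicator_of_notMem h1, Set.indicator_of_notMem h2]
        exact (tendsto_const_nhds.congr' (hev.mono fun t ht => ht.symm))
      · -- r > t₀ : use continuity of t ↦ h t r
        have hmemIio : Set.Iio r ∈ 𝓝 t₀ := Iio_mem_nhds hgt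
        have hcw : ContinuousWithinAt (fun t => h t r) (Set.Icc 0 T) t₀ := by
          rw [← continuousWithinAt_inter hmemIio]
          exact hc₂ r hr t₀ ⟨ht₀, hgt⟩
        have hev : ∀ᶠ t in 𝓝[Set.Icc (0:ℝ) T] t₀, F t r = h t r := by
          filter_upwards [nhdsWithin_le_nhds hmemIio] with t htr
          have : r ∈ Set.Ioc t T := ⟨htr, hr.2⟩
          rw [hF]; simp only [Set.indicator_of_mem this]
        have hF0 : F t₀ r = h t₀ r := by
          rw [hF]; simp only [Set.indicator_of_mem (Set.mem_Ioc.mpr ⟨hgt, hr.2⟩)]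
        rw [hF0]
        exact Filter.Tendsto.congr' (hev.mono fun t ht => ht.symm) hcw
  have htend : Tendsto (fun t => ∫ r in t..T, h t r) (𝓝[Set.Icc (0:ℝ) T] t₀)
      (𝓝 (∫ r, F t₀ r ∂μ)) := by
    refine Filter.Tendsto.congr' ?_ key
    filter_upwards [self_mem_nhdsWithin] with t ht
    exact (hmem t ht).symm
  rw [ContinuousWithinAt, hmem t₀ ht₀]
  exact htend

end Aux2

section Aux3

variable {E : Type*} [NormedAddCommGroup E] [NormedSpace ℝ E] [CompleteSpace E]

/-- Fubini on a triangle for a bounded function, continuous in each variable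
separately and jointly continuous off the diagonal. -/
lemma tri_swap {a b : ℝ} (hab : a ≤ b) {f : ℝ → ℝ → E} {C : ℝ} (hC : 0 ≤ C)
    (hbdd : ∀ r q : ℝ, a ≤ q → q ≤ r → r ≤ b → ‖f r q‖ ≤ C)
    (hc₁ : ∀ r ∈ Set.Icc a b, ContinuousOn (fun q => f r q) (Set.Icc a r))
    (hc₂ : ∀ q ∈ Set.Icc a b, ContinuousOn (fun r => f r q) (Set.Icc q b))
    (hj : ContinuousOn (fun p : ℝ × ℝ => f p.1 p.2)
        {p : ℝ × ℝ | a ≤ p.2 ∧ p.2 < p.1 ∧ p.1 ≤ b}) :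
    (∫ r in a..b, ∫ q in a..r, f r q) = ∫ q in a..b, ∫ r in q..b, f r q := by
  set μ := volume.restrict (Set.Ioc a b) with hμ
  haveI hfin : IsFiniteMeasure μ := ⟨by
    rw [hμ, Measure.restrict_apply_univ]; exact measure_Ioc_lt_top⟩
  set S : Set (ℝ × ℝ) := {p : ℝ × ℝ | a ≤ p.2 ∧ p.2 < p.1 ∧ p.1 ≤ b} with hS
  have hSm : MeasurableSet S := by
    apply MeasurableSet.inter
    · exact measurableSet_le measurable_const measurable_snd
    apply MeasurableSet.inter
    · exact measurableSet_lt measurable_snd measurable_fst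
    · exact measurableSet_le measurable_fst measurable_const
  set F : ℝ × ℝ → E := S.indicator (fun p => f p.1 p.2) with hF
  have hFm : AEStronglyMeasurable F (μ.prod μ) := by
    have h1 : AEStronglyMeasurable (fun p : ℝ × ℝ => f p.1 p.2) (volume.restrict S) :=
      hj.aestronglyMeasurable hSm
    have h2 : AEStronglyMeasurable F volume :=
      (aestronglyMeasurable_indicator_iff hSm).mpr h1
    have h3 : μ.prod μ = (volume : Measure (ℝ × ℝ)).restrict (Set.Ioc a b ×ˢ Set.Ioc a b) := by
      rw [hμ, Measure.prod_restrict, ← Measure.volume_eq_prod]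
    rw [h3]
    exact h2.restrict
  have hFb : ∀ p : ℝ × ℝ, ‖F p‖ ≤ C := by
    intro p
    rw [hF]
    by_cases hp : p ∈ S
    · rw [Set.indicator_of_mem hp]
      exact hbdd p.1 p.2 hp.1 hp.2.1.le hp.2.2
    · rw [Set.indicator_of_notMem hp, norm_zero]; exact hC
  have hFi : Integrable F (μ.prod μ) :=
    Integrable.mono' (integrable_const C) hFm (Filter.Eventually.of_forall hFb)
  have L : (∫ r in a..b, ∫ q in a..r, f r q) = ∫ r, (∫ q, F (r, q) ∂μ) ∂μ := by
    rw [intervalIntegral.integral_of_le hab, hμ]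
    apply setIntegral_congr_fun measurableSet_Ioc
    intro r hr
    have har : a ≤ r := hr.1.le
    have hrb : r ≤ b := hr.2
    have hsec : ∀ q : ℝ, F (r, q) = (Set.Ico a r).indicator (fun q => f r q) q := by
      intro q
      rw [hF]
      by_cases hq : q ∈ Set.Ico a r
      · rw [Set.indicator_of_mem hq,
          Set.indicator_of_mem (show (r, q) ∈ S from ⟨hq.1, hq.2, hrb⟩)]
      · rw [Set.indicator_of_notMem hq, Set.indicator_of_notMem]
        intro hmem
        exact hq ⟨hmem.1, hmem.2.1⟩
    have : (∫ q, F (r, q) ∂μ) = ∫ q in a..r, f r q := by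
      rw [show (fun q => F (r, q)) = (Set.Ico a r).indicator (fun q => f r q) from funext hsec]
      rw [MeasureTheory.integral_indicator measurableSet_Ico, hμ,
        Measure.restrict_restrict measurableSet_Ico]
      have hinter : Set.Ico a r ∩ Set.Ioc a b = Set.Ioo a r := by
        ext q
        simp only [Set.mem_inter_iff, Set.mem_Ico, Set.mem_Ioc, Set.mem_Ioo]
        constructor
        · rintro ⟨⟨h1, h2⟩, h3, h4⟩; exact ⟨h3, h2⟩
        · rintro ⟨h1, h2⟩; exact ⟨⟨h1.le, h2⟩, h1, (h2.le.trans hrb)⟩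
      rw [hinter, ← MeasureTheory.integral_Ioc_eq_integral_Ioo,
        ← intervalIntegral.integral_of_le har]
    exact this.symm
  have R : (∫ q in a..b, ∫ r in q..b, f r q) = ∫ q, (∫ r, F (r, q) ∂μ) ∂μ := by
    rw [intervalIntegral.integral_of_le hab, hμ]
    apply setIntegral_congr_fun measurableSet_Ioc
    intro q hq
    have haq : a ≤ q := hq.1.le
    have hsec : ∀ r : ℝ, F (r, q) = (Set.Ioc q b).indicator (fun r => f r q) r := by
      intro r
      rw [hF]
      by_cases hr : r ∈ Set.Ioc q b
      · rw [Set.indicator_of_mem hr,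
          Set.indicator_of_mem (show (r, q) ∈ S from ⟨haq, hr.1, hr.2⟩)]
      · rw [Set.indicator_of_notMem hr, Set.indicator_of_notMem]
        intro hmem
        exact hr ⟨hmem.2.1, hmem.2.2⟩
    have : (∫ r, F (r, q) ∂μ) = ∫ r in q..b, f r q := by
      rw [show (fun r => F (r, q)) = (Set.Ioc q b).indicator (fun r => f r q) from funext hsec]
      rw [MeasureTheory.integral_indicator measurableSet_Ioc, hμ,
        Measure.restrict_restrict measurableSet_Ioc]
      have hinter : Set.Ioc q b ∩ Set.Ioc a b = Set.Ioc q b := by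
        apply Set.inter_eq_left.mpr
        intro r hr
        exact ⟨hq.1.trans hr.1, hr.2⟩
      rw [hinter, ← intervalIntegral.integral_of_le hq.2]
    exact this.symm
  rw [L, R]
  exact MeasureTheory.integral_integral_swap hFi

end Aux3

/-- representation of the unique strongly continuous solution of the
linear integral equation `P(t) = U⃗_{t,T} G U⃖_{T,t} + ∫_t^T U⃗_{t,r}[Q₁₂(r) − P(r)Q₁(r)]U⃖_{r,t} dr`
via the perturbed forward family `Ω⃖`. -/
theorem linear_integral_equation_unique_solution_left
    {X₁ X₂ : Type*}
    [NormedAddCommGroup X₁] [NormedSpace ℝ X₁] [CompleteSpace X₁]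
    [NormedAddCommGroup X₂] [NormedSpace ℝ X₂] [CompleteSpace X₂]
    (T : ℝ) (hT : 0 ≤ T)
    -- forward evolution family in L(X₁): strongly continuous, uniformly bounded
    (Ul : ℝ → ℝ → X₁ →L[ℝ] X₁)
    (hUlid : ∀ s ∈ Set.Icc 0 T, Ul s s = ContinuousLinearMap.id ℝ X₁)
    (hUlcomp : ∀ s r t : ℝ, 0 ≤ s → s ≤ r → r ≤ t → t ≤ T →
      Ul t s = (Ul t r).comp (Ul r s))
    (MUl : ℝ) (hUlbdd : ∀ s t : ℝ, 0 ≤ s → s ≤ t → t ≤ T → ‖Ul t s‖ ≤ MUl)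
    (hUlsc₁ : ∀ x : X₁, ∀ s ∈ Set.Icc 0 T, ContinuousOn (fun t => Ul t s x) (Set.Icc s T))
    (hUlsc₂ : ∀ x : X₁, ∀ t ∈ Set.Icc 0 T, ContinuousOn (fun s => Ul t s x) (Set.Icc 0 t))
    -- backward evolution family in L(X₂): strongly continuous, uniformly bounded
    (Ub : ℝ → ℝ → X₂ →L[ℝ] X₂)
    (hUbid : ∀ s ∈ Set.Icc 0 T, Ub s s = ContinuousLinearMap.id ℝ X₂)
    (hUbcomp : ∀ t r s : ℝ, 0 ≤ t → t ≤ r → r ≤ s → s ≤ T →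
      Ub t s = (Ub t r).comp (Ub r s))
    (MUb : ℝ) (hUbbdd : ∀ t s : ℝ, 0 ≤ t → t ≤ s → s ≤ T → ‖Ub t s‖ ≤ MUb)
    (hUbsc₁ : ∀ y : X₂, ∀ s ∈ Set.Icc 0 T, ContinuousOn (fun t => Ub t s y) (Set.Icc 0 s))
    (hUbsc₂ : ∀ y : X₂, ∀ t ∈ Set.Icc 0 T, ContinuousOn (fun s => Ub t s y) (Set.Icc t T))
    -- strongly continuous coefficients
    (Q12 : ℝ → X₁ →L[ℝ] X₂)
    (hQ12sc : ∀ x : X₁, ContinuousOn (fun t => Q12 t x) (Set.Icc 0 T))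
    (Q1 : ℝ → X₁ →L[ℝ] X₁)
    (hQ1sc : ∀ x : X₁, ContinuousOn (fun t => Q1 t x) (Set.Icc 0 T))
    -- the perturbed forward evolution family Ω⃖
    (Ωl : ℝ → ℝ → X₁ →L[ℝ] X₁)
    (hΩlid : ∀ s ∈ Set.Icc 0 T, Ωl s s = ContinuousLinearMap.id ℝ X₁)
    (hΩlcomp : ∀ s r t : ℝ, 0 ≤ s → s ≤ r → r ≤ t → t ≤ T →
      Ωl t s = (Ωl t r).comp (Ωl r s))
    (MΩl : ℝ) (hΩlbdd : ∀ s t : ℝ, 0 ≤ s → s ≤ t → t ≤ T → ‖Ωl t s‖ ≤ MΩl)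
    (hΩlsc₁ : ∀ x : X₁, ∀ s ∈ Set.Icc 0 T, ContinuousOn (fun t => Ωl t s x) (Set.Icc s T))
    (hΩlsc₂ : ∀ x : X₁, ∀ t ∈ Set.Icc 0 T, ContinuousOn (fun s => Ωl t s x) (Set.Icc 0 t))
    (hΩleq : ∀ x : X₁, ∀ s t : ℝ, 0 ≤ s → s ≤ t → t ≤ T →
      Ωl t s x = Ul t s x - ∫ r in s..t, Ωl t r (Q1 r (Ul r s x)))
    (G : X₁ →L[ℝ] X₂) :
    ∃ P : ℝ → X₁ →L[ℝ] X₂,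
      (∀ x : X₁, ContinuousOn (fun t => P t x) (Set.Icc 0 T)) ∧
      -- P is given by the representation formula
      (∀ t ∈ Set.Icc 0 T, ∀ x : X₁,
        P t x = Ub t T (G (Ωl T t x)) + ∫ r in t..T, Ub t r (Q12 r (Ωl r t x))) ∧
      -- P solves the linear integral equation
      (∀ t ∈ Set.Icc 0 T, ∀ x : X₁,
        P t x = Ub t T (G (Ul T t x)) +
          ∫ r in t..T, Ub t r (Q12 r (Ul r t x) - P r (Q1 r (Ul r t x)))) ∧
      -- and it is the unique strongly continuous solution
      (∀ Q : ℝ → X₁ →L[ℝ] X₂,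
        (∀ x : X₁, ContinuousOn (fun t => Q t x) (Set.Icc 0 T)) →
        (∀ t ∈ Set.Icc 0 T, ∀ x : X₁,
          Q t x = Ub t T (G (Ul T t x)) +
            ∫ r in t..T, Ub t r (Q12 r (Ul r t x) - Q r (Q1 r (Ul r t x)))) →
        ∀ t ∈ Set.Icc 0 T, Q t = P t) := by
    classical
  obtain ⟨M12, hM12_0, hM12⟩ := sc_bound isCompact_Icc hQ12sc
  obtain ⟨M1, hM1_0, hM1⟩ := sc_bound isCompact_Icc hQ1sc
  set KUl : ℝ := max MUl 0 with hKUl_def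
  set KUb : ℝ := max MUb 0 with hKUb_def
  set KW : ℝ := max MΩl 0 with hKW_def
  have hKUl0 : (0:ℝ) ≤ KUl := le_max_right _ _
  have hKUb0 : (0:ℝ) ≤ KUb := le_max_right _ _
  have hKW0 : (0:ℝ) ≤ KW := le_max_right _ _
  have bUl : ∀ s t : ℝ, 0 ≤ s → s ≤ t → t ≤ T → ∀ z : X₁, ‖Ul t s z‖ ≤ KUl * ‖z‖ := by
    intro s t h1 h2 h3 z
    refine ((Ul t s).le_opNorm z).trans ?_
    exact mul_le_mul_of_nonneg_right (le_max_of_le_left (hUlbdd s t h1 h2 h3)) (norm_nonneg z)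
  have bUb : ∀ t s : ℝ, 0 ≤ t → t ≤ s → s ≤ T → ∀ z : X₂, ‖Ub t s z‖ ≤ KUb * ‖z‖ := by
    intro t s h1 h2 h3 z
    refine ((Ub t s).le_opNorm z).trans ?_
    exact mul_le_mul_of_nonneg_right (le_max_of_le_left (hUbbdd t s h1 h2 h3)) (norm_nonneg z)
  have bW : ∀ s t : ℝ, 0 ≤ s → s ≤ t → t ≤ T → ∀ z : X₁, ‖Ωl t s z‖ ≤ KW * ‖z‖ := by
    intro s t h1 h2 h3 z
    refine ((Ωl t s).le_opNorm z).trans ?_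
    exact mul_le_mul_of_nonneg_right (le_max_of_le_left (hΩlbdd s t h1 h2 h3)) (norm_nonneg z)
  have bQ12 : ∀ r ∈ Set.Icc (0:ℝ) T, ∀ z : X₁, ‖Q12 r z‖ ≤ M12 * ‖z‖ := by
    intro r hr z
    exact ((Q12 r).le_opNorm z).trans (mul_le_mul_of_nonneg_right (hM12 r hr) (norm_nonneg z))
  have bQ1 : ∀ r ∈ Set.Icc (0:ℝ) T, ∀ z : X₁, ‖Q1 r z‖ ≤ M1 * ‖z‖ := by
    intro r hr z
    exact ((Q1 r).le_opNorm z).trans (mul_le_mul_of_nonneg_right (hM1 r hr) (norm_nonneg z))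
  have hsub : ∀ {t : ℝ}, t ∈ Set.Icc (0:ℝ) T → Set.Icc t T ⊆ Set.Icc (0:ℝ) T :=
    fun ht => Set.Icc_subset_Icc ht.1 le_rfl
  -- continuity of the representation integrand
  have corig : ∀ t ∈ Set.Icc (0:ℝ) T, ∀ x : X₁,
      ContinuousOn (fun r => Ub t r (Q12 r (Ωl r t x))) (Set.Icc t T) := by
    intro t ht x
    refine sc_comp (A := fun r => Ub t r) (M := KUb)
      (fun r hr => le_max_of_le_left (hUbbdd t r ht.1 hr.1 hr.2))
      (fun y => hUbsc₂ y t ht) ?_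
    refine sc_comp (A := fun r => Q12 r) (M := M12) (fun r hr => hM12 r (hsub ht hr))
      (fun y => (hQ12sc y).mono (hsub ht)) ?_
    exact hΩlsc₁ x t ht
  -- pointwise bound for the representation integrand
  have borig : ∀ t ∈ Set.Icc (0:ℝ) T, ∀ x : X₁, ∀ r ∈ Set.Icc t T,
      ‖Ub t r (Q12 r (Ωl r t x))‖ ≤ KUb * (M12 * (KW * ‖x‖)) := by
    intro t ht x r hr
    refine (bUb t r ht.1 hr.1 hr.2 _).trans ?_
    refine mul_le_mul_of_nonneg_left ?_ hKUb0
    refine (bQ12 r (hsub ht hr) _).trans ?_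
    refine mul_le_mul_of_nonneg_left ?_ hM12_0
    exact bW t r ht.1 hr.1 hr.2 x
  set C₀ : ℝ := KUb * ‖G‖ * KW + KUb * M12 * KW * T with hC₀_def
  have hC₀0 : 0 ≤ C₀ := by
    refine add_nonneg (mul_nonneg (mul_nonneg hKUb0 (norm_nonneg G)) hKW0) ?_
    exact mul_nonneg (mul_nonneg (mul_nonneg hKUb0 hM12_0) hKW0) hT
  -- existence of the operator P t for each t ∈ [0, T]
  have hex : ∀ t ∈ Set.Icc (0:ℝ) T, ∃ L : X₁ →L[ℝ] X₂, ‖L‖ ≤ C₀ ∧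
      ∀ x : X₁, L x = Ub t T (G (Ωl T t x)) + ∫ r in t..T, Ub t r (Q12 r (Ωl r t x)) := by
    intro t ht
    have hint : ∀ x : X₁,
        IntervalIntegrable (fun r => Ub t r (Q12 r (Ωl r t x))) volume t T := by
      intro x
      apply ContinuousOn.intervalIntegrable
      rw [Set.uIcc_of_le ht.2]
      exact corig t ht x
    have hbnd : ∀ x : X₁,
        ‖Ub t T (G (Ωl T t x)) + ∫ r in t..T, Ub t r (Q12 r (Ωl r t x))‖ ≤ C₀ * ‖x‖ := by
      intro x
      have h1 : ‖Ub t T (G (Ωl T t x))‖ ≤ KUb * (‖G‖ * (KW * ‖x‖)) := by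
        refine (bUb t T ht.1 ht.2 le_rfl _).trans ?_
        refine mul_le_mul_of_nonneg_left ?_ hKUb0
        refine (G.le_opNorm _).trans ?_
        exact mul_le_mul_of_nonneg_left (bW t T ht.1 ht.2 le_rfl x) (norm_nonneg G)
      have h2 : ‖∫ r in t..T, Ub t r (Q12 r (Ωl r t x))‖
          ≤ KUb * (M12 * (KW * ‖x‖)) * |T - t| := by
        refine intervalIntegral.norm_integral_le_of_norm_le_const (fun r hr => ?_)
        rw [Set.uIoc_of_le ht.2] at hr
        exact borig t ht x r ⟨hr.1.le, hr.2⟩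
      rw [abs_of_nonneg (sub_nonneg.mpr ht.2)] at h2
      have h2' : ‖∫ r in t..T, Ub t r (Q12 r (Ωl r t x))‖
          ≤ KUb * (M12 * (KW * ‖x‖)) * T := by
        refine h2.trans (mul_le_mul_of_nonneg_left (by linarith [ht.1]) ?_)
        exact mul_nonneg hKUb0 (mul_nonneg hM12_0 (mul_nonneg hKW0 (norm_nonneg x)))
      calc ‖Ub t T (G (Ωl T t x)) + ∫ r in t..T, Ub t r (Q12 r (Ωl r t x))‖
          ≤ ‖Ub t T (G (Ωl T t x))‖ + ‖∫ r in t..T, Ub t r (Q12 r (Ωl r t x))‖ :=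
            norm_add_le _ _
        _ ≤ KUb * (‖G‖ * (KW * ‖x‖)) + KUb * (M12 * (KW * ‖x‖)) * T := add_le_add h1 h2'
        _ = C₀ * ‖x‖ := by rw [hC₀_def]; ring
    refine ⟨LinearMap.mkContinuous
      { toFun := fun x => Ub t T (G (Ωl T t x)) + ∫ r in t..T, Ub t r (Q12 r (Ωl r t x))
        map_add' := ?_
        map_smul' := ?_ } C₀ hbnd,
      LinearMap.mkContinuous_norm_le _ hC₀0 _, fun x => rfl⟩
    · intro x x'
      simp only [map_add]
      rw [intervalIntegral.integral_add (hint x) (hint x')]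
      abel
    · intro c x
      simp only [RingHom.id_apply]
      have h1 : (fun r => Ub t r (Q12 r (Ωl r t (c • x)))) =
          fun r => c • Ub t r (Q12 r (Ωl r t x)) := by
        funext r
        rw [(Ωl r t).map_smul, (Q12 r).map_smul, (Ub t r).map_smul]
      rw [(Ωl T t).map_smul, G.map_smul, (Ub t T).map_smul, h1,
        intervalIntegral.integral_smul, ← smul_add]
  set P : ℝ → X₁ →L[ℝ] X₂ :=
    fun t => if ht : t ∈ Set.Icc (0:ℝ) T then (hex t ht).choose else 0 with hP_def
  have hPspec : ∀ t ∈ Set.Icc (0:ℝ) T, ∀ x : X₁,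
      P t x = Ub t T (G (Ωl T t x)) + ∫ r in t..T, Ub t r (Q12 r (Ωl r t x)) := by
    intro t ht x
    simp only [hP_def, dif_pos ht]
    exact (hex t ht).choose_spec.2 x
  have hPbdd : ∀ t ∈ Set.Icc (0:ℝ) T, ‖P t‖ ≤ C₀ := by
    intro t ht
    simp only [hP_def, dif_pos ht]
    exact (hex t ht).choose_spec.1
  have bP : ∀ t ∈ Set.Icc (0:ℝ) T, ∀ x : X₁, ‖P t x‖ ≤ C₀ * ‖x‖ := fun t ht x =>
    ((P t).le_opNorm x).trans (mul_le_mul_of_nonneg_right (hPbdd t ht) (norm_nonneg x))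
  -- Part 1: strong continuity of P
  have hPcont : ∀ x : X₁, ContinuousOn (fun t => P t x) (Set.Icc (0:ℝ) T) := by
    intro x
    have c1 : ContinuousOn (fun t => Ub t T (G (Ωl T t x))) (Set.Icc (0:ℝ) T) := by
      refine sc_comp (A := fun t => Ub t T) (M := KUb)
        (fun t ht => le_max_of_le_left (hUbbdd t T ht.1 ht.2 le_rfl))
        (fun y => hUbsc₁ y T ⟨hT, le_rfl⟩) ?_
      exact G.continuous.comp_continuousOn (hΩlsc₂ x T ⟨hT, le_rfl⟩)
    have c2 : ContinuousOn (fun t => ∫ r in t..T, Ub t r (Q12 r (Ωl r t x)))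
        (Set.Icc (0:ℝ) T) := by
      refine param_cont hT (C := KUb * (M12 * (KW * ‖x‖)))
        (mul_nonneg hKUb0 (mul_nonneg hM12_0 (mul_nonneg hKW0 (norm_nonneg x)))) ?_ ?_ ?_
      · intro t r h0t htr hrT
        exact borig t ⟨h0t, htr.trans hrT⟩ x r ⟨htr, hrT⟩
      · intro t ht
        exact corig t ht x
      · intro r hr
        refine sc_comp (A := fun s => Ub s r) (M := KUb) ?_ ?_ ?_
        · rintro s ⟨hs1, hs2⟩
          exact le_max_of_le_left (hUbbdd s r hs1.1 (le_of_lt hs2) hr.2)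
        · intro y
          exact (hUbsc₁ y r ⟨hr.1.le, hr.2⟩).mono (fun s hs => ⟨hs.1.1, hs.2.le⟩)
        · refine (Q12 r).continuous.comp_continuousOn ?_
          exact (hΩlsc₂ x r ⟨hr.1.le, hr.2⟩).mono (fun s hs => ⟨hs.1.1, hs.2.le⟩)
    exact (c1.add c2).congr (fun t ht => hPspec t ht x)
  -- Part 3: P solves the integral equation
  have heq : ∀ t ∈ Set.Icc (0:ℝ) T, ∀ x : X₁,
      P t x = Ub t T (G (Ul T t x)) +
        ∫ r in t..T, Ub t r (Q12 r (Ul r t x) - P r (Q1 r (Ul r t x))) := by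
    intro t ht x
    set yv : ℝ → X₁ := fun q => Q1 q (Ul q t x) with hyv_def
    have hyv_cont : ContinuousOn yv (Set.Icc t T) := by
      refine sc_comp (A := fun q => Q1 q) (M := M1) (fun q hq => hM1 q (hsub ht hq))
        (fun z => (hQ1sc z).mono (hsub ht)) ?_
      exact hUlsc₁ x t ht
    have byv : ∀ q ∈ Set.Icc t T, ‖yv q‖ ≤ M1 * (KUl * ‖x‖) := by
      intro q hq
      refine (bQ1 q (hsub ht hq) _).trans ?_
      exact mul_le_mul_of_nonneg_left (bUl t q ht.1 hq.1 hq.2 x) hM1_0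
    set f2 : ℝ → ℝ → X₂ := fun r q => Ub t r (Q12 r (Ωl r q (yv q))) with hf2_def
    set g2 : ℝ → ℝ → X₂ := fun q r => Ub q r (Q12 r (Ωl r q (yv q))) with hg2_def
    have hΩy : ∀ r ∈ Set.Icc t T, ContinuousOn (fun q => Ωl r q (yv q)) (Set.Icc t r) := by
      intro r hr
      have hsub2 : Set.Icc t r ⊆ Set.Icc t T := Set.Icc_subset_Icc le_rfl hr.2
      refine sc_comp (A := fun q => Ωl r q) (M := KW) ?_ ?_ (hyv_cont.mono hsub2)
      · intro q hq
        exact le_max_of_le_left (hΩlbdd q r (ht.1.trans hq.1) hq.2 hr.2)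
      · intro z
        exact (hΩlsc₂ z r ⟨ht.1.trans hr.1, hr.2⟩).mono (fun q hq => ⟨ht.1.trans hq.1, hq.2⟩)
    have hΩy_int : ∀ r ∈ Set.Icc t T,
        IntervalIntegrable (fun q => Ωl r q (yv q)) volume t r := by
      intro r hr
      apply ContinuousOn.intervalIntegrable
      rw [Set.uIcc_of_le hr.1]
      exact hΩy r hr
    have hWeq : ∀ s ∈ Set.Icc t T, Ωl s t x = Ul s t x - ∫ q in t..s, Ωl s q (yv q) :=
      fun s hs => hΩleq x t s ht.1 hs.1 hs.2
    have e3 : Ub t T (G (Ωl T t x)) =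
        Ub t T (G (Ul T t x)) - ∫ q in t..T, Ub t T (G (Ωl T q (yv q))) := by
      rw [hWeq T ⟨ht.2, le_rfl⟩, map_sub, map_sub]
      congr 1
      have hcomm := ((Ub t T).comp G).intervalIntegral_comp_comm (hΩy_int T ⟨ht.2, le_rfl⟩)
      simp only [ContinuousLinearMap.comp_apply] at hcomm
      exact hcomm.symm
    have hA_cont : ContinuousOn (fun r => Ub t r (Q12 r (Ul r t x))) (Set.Icc t T) := by
      refine sc_comp (A := fun r => Ub t r) (M := KUb)
        (fun r hr => le_max_of_le_left (hUbbdd t r ht.1 hr.1 hr.2))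
        (fun y => hUbsc₂ y t ht) ?_
      refine sc_comp (A := fun r => Q12 r) (M := M12) (fun r hr => hM12 r (hsub ht hr))
        (fun y => (hQ12sc y).mono (hsub ht)) ?_
      exact hUlsc₁ x t ht
    have hA_int : IntervalIntegrable (fun r => Ub t r (Q12 r (Ul r t x))) volume t T := by
      apply ContinuousOn.intervalIntegrable
      rw [Set.uIcc_of_le ht.2]
      exact hA_cont
    have horig_int : IntervalIntegrable (fun r => Ub t r (Q12 r (Ωl r t x))) volume t T := by
      apply ContinuousOn.intervalIntegrable
      rw [Set.uIcc_of_le ht.2]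
      exact corig t ht x
    have e4 : ∀ r ∈ Set.Icc t T,
        Ub t r (Q12 r (Ωl r t x)) = Ub t r (Q12 r (Ul r t x)) - ∫ q in t..r, f2 r q := by
      intro r hr
      rw [hWeq r hr, map_sub, map_sub]
      congr 1
      have hcomm := ((Ub t r).comp (Q12 r)).intervalIntegral_comp_comm (hΩy_int r hr)
      simp only [ContinuousLinearMap.comp_apply] at hcomm
      exact hcomm.symm
    have hdiff_int : IntervalIntegrable
        (fun r => Ub t r (Q12 r (Ul r t x)) - ∫ q in t..r, f2 r q) volume t T :=
      horig_int.congr_Icc ht.2 e4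
    have hB_int : IntervalIntegrable (fun r => ∫ q in t..r, f2 r q) volume t T := by
      refine (hA_int.sub hdiff_int).congr_Icc ht.2 (fun r hr => ?_)
      exact sub_sub_cancel _ _
    have e5 : (∫ r in t..T, Ub t r (Q12 r (Ωl r t x)))
        = (∫ r in t..T, Ub t r (Q12 r (Ul r t x)))
          - ∫ r in t..T, ∫ q in t..r, f2 r q := by
      rw [← intervalIntegral.integral_sub hA_int hB_int]
      apply intervalIntegral.integral_congr
      intro r hr
      rw [Set.uIcc_of_le ht.2] at hr
      exact e4 r hr
    have hCf2_0 : (0:ℝ) ≤ KUb * (M12 * (KW * (M1 * (KUl * ‖x‖)))) :=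
      mul_nonneg hKUb0 (mul_nonneg hM12_0 (mul_nonneg hKW0
        (mul_nonneg hM1_0 (mul_nonneg hKUl0 (norm_nonneg x)))))
    have bf2 : ∀ r q : ℝ, t ≤ q → q ≤ r → r ≤ T →
        ‖f2 r q‖ ≤ KUb * (M12 * (KW * (M1 * (KUl * ‖x‖)))) := by
      intro r q h1 h2 h3
      refine (bUb t r ht.1 (h1.trans h2) h3 _).trans ?_
      refine mul_le_mul_of_nonneg_left ?_ hKUb0
      refine (bQ12 r ⟨ht.1.trans (h1.trans h2), h3⟩ _).trans ?_
      refine mul_le_mul_of_nonneg_left ?_ hM12_0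
      refine (bW q r (ht.1.trans h1) h2 h3 _).trans ?_
      refine mul_le_mul_of_nonneg_left ?_ hKW0
      exact byv q ⟨h1, h2.trans h3⟩
    have hf2q : ∀ r ∈ Set.Icc t T, ContinuousOn (fun q => f2 r q) (Set.Icc t r) := by
      intro r hr
      exact ((Ub t r).comp (Q12 r)).continuous.comp_continuousOn (hΩy r hr)
    have hf2r : ∀ q ∈ Set.Icc t T, ContinuousOn (fun r => f2 r q) (Set.Icc q T) := by
      intro q hq
      refine sc_comp (A := fun r => Ub t r) (M := KUb)
        (fun r hr => le_max_of_le_left (hUbbdd t r ht.1 (hq.1.trans hr.1) hr.2))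
        (fun y => (hUbsc₂ y t ht).mono (Set.Icc_subset_Icc hq.1 le_rfl)) ?_
      refine sc_comp (A := fun r => Q12 r) (M := M12)
        (fun r hr => hM12 r ⟨ht.1.trans (hq.1.trans hr.1), hr.2⟩)
        (fun y => (hQ12sc y).mono (fun r hr => ⟨ht.1.trans (hq.1.trans hr.1), hr.2⟩)) ?_
      exact hΩlsc₁ (yv q) q ⟨ht.1.trans hq.1, hq.2⟩
    have hjoint : ContinuousOn (fun p : ℝ × ℝ => f2 p.1 p.2)
        {p : ℝ × ℝ | t ≤ p.2 ∧ p.2 < p.1 ∧ p.1 ≤ T} := by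
      intro p₀ hp₀
      obtain ⟨hq₀, hqr₀, hr₀⟩ := hp₀
      set m : ℝ := (p₀.2 + p₀.1) / 2 with hm_def
      have hm1 : p₀.2 < m := by rw [hm_def]; linarith
      have hm2 : m < p₀.1 := by rw [hm_def]; linarith
      have hmT : m ≤ T := hm2.le.trans hr₀
      have htm : t ≤ m := hq₀.trans hm1.le
      have h0m : (0:ℝ) ≤ m := ht.1.trans htm
      have hV : {p : ℝ × ℝ | p.2 < m ∧ m < p.1} ∈ 𝓝 p₀ := by
        refine IsOpen.mem_nhds ?_ ⟨hm1, hm2⟩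
        exact (isOpen_lt continuous_snd continuous_const).inter
          (isOpen_lt continuous_const continuous_fst)
      rw [← continuousWithinAt_inter hV]
      set S' : Set (ℝ × ℝ) := {p : ℝ × ℝ | t ≤ p.2 ∧ p.2 ≤ m ∧ m ≤ p.1 ∧ p.1 ≤ T} with hS'_def
      have hsubV : ({p : ℝ × ℝ | t ≤ p.2 ∧ p.2 < p.1 ∧ p.1 ≤ T}
          ∩ {p : ℝ × ℝ | p.2 < m ∧ m < p.1}) ⊆ S' := by
        rintro p ⟨⟨h1, h2, h3⟩, h4, h5⟩
        exact ⟨h1, h4.le, h5.le, h3⟩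
      have hg : ContinuousOn
          (fun p : ℝ × ℝ => Ub t p.1 (Q12 p.1 (Ωl p.1 m (Ωl m p.2 (yv p.2))))) S' := by
        refine sc_comp (A := fun p : ℝ × ℝ => Ub t p.1) (M := KUb)
          (fun p hp => le_max_of_le_left (hUbbdd t p.1 ht.1 (htm.trans hp.2.2.1) hp.2.2.2))
          (fun y => (hUbsc₂ y t ht).comp continuous_fst.continuousOn
            (fun p hp => ⟨htm.trans hp.2.2.1, hp.2.2.2⟩)) ?_
        refine sc_comp (A := fun p : ℝ × ℝ => Q12 p.1) (M := M12)
          (fun p hp => hM12 p.1 ⟨h0m.trans hp.2.2.1, hp.2.2.2⟩)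
          (fun y => (hQ12sc y).comp continuous_fst.continuousOn
            (fun p hp => ⟨h0m.trans hp.2.2.1, hp.2.2.2⟩)) ?_
        refine sc_comp (A := fun p : ℝ × ℝ => Ωl p.1 m) (M := KW)
          (fun p hp => le_max_of_le_left (hΩlbdd m p.1 h0m hp.2.2.1 hp.2.2.2))
          (fun z => (hΩlsc₁ z m ⟨h0m, hmT⟩).comp continuous_fst.continuousOn
            (fun p hp => ⟨hp.2.2.1, hp.2.2.2⟩)) ?_
        refine sc_comp (A := fun p : ℝ × ℝ => Ωl m p.2) (M := KW)
          (fun p hp => le_max_of_le_left (hΩlbdd p.2 m (ht.1.trans hp.1) hp.2.1 hmT))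
          (fun z => (hΩlsc₂ z m ⟨h0m, hmT⟩).comp continuous_snd.continuousOn
            (fun p hp => ⟨ht.1.trans hp.1, hp.2.1⟩)) ?_
        exact hyv_cont.comp continuous_snd.continuousOn
          (fun p hp => ⟨hp.1, hp.2.1.trans hmT⟩)
      have hp₀S' : p₀ ∈ S' := ⟨hq₀, hm1.le, hm2.le, hr₀⟩
      have hEq : ∀ p ∈ ({p : ℝ × ℝ | t ≤ p.2 ∧ p.2 < p.1 ∧ p.1 ≤ T}
          ∩ {p : ℝ × ℝ | p.2 < m ∧ m < p.1}),
          f2 p.1 p.2 = Ub t p.1 (Q12 p.1 (Ωl p.1 m (Ωl m p.2 (yv p.2)))) := by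
        rintro p ⟨⟨h1, h2, h3⟩, h4, h5⟩
        have hcomp := hΩlcomp p.2 m p.1 (ht.1.trans h1) h4.le h5.le h3
        simp only [hf2_def]
        rw [hcomp]
        rfl
      exact ((hg p₀ hp₀S').mono hsubV).congr hEq (hEq p₀ ⟨⟨hq₀, hqr₀, hr₀⟩, hm1, hm2⟩)
    have e6 : (∫ r in t..T, ∫ q in t..r, f2 r q) = ∫ q in t..T, ∫ r in q..T, f2 r q :=
      tri_swap ht.2 hCf2_0 bf2 hf2q hf2r hjoint
    have hg2_cont : ∀ q ∈ Set.Icc t T, ContinuousOn (fun r => g2 q r) (Set.Icc q T) := by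
      intro q hq
      refine sc_comp (A := fun r => Ub q r) (M := KUb)
        (fun r hr => le_max_of_le_left (hUbbdd q r (ht.1.trans hq.1) hr.1 hr.2))
        (fun y => hUbsc₂ y q ⟨ht.1.trans hq.1, hq.2⟩) ?_
      refine sc_comp (A := fun r => Q12 r) (M := M12)
        (fun r hr => hM12 r ⟨ht.1.trans (hq.1.trans hr.1), hr.2⟩)
        (fun y => (hQ12sc y).mono (fun r hr => ⟨ht.1.trans (hq.1.trans hr.1), hr.2⟩)) ?_
      exact hΩlsc₁ (yv q) q ⟨ht.1.trans hq.1, hq.2⟩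
    have hg2_int : ∀ q ∈ Set.Icc t T,
        IntervalIntegrable (fun r => g2 q r) volume q T := by
      intro q hq
      apply ContinuousOn.intervalIntegrable
      rw [Set.uIcc_of_le hq.2]
      exact hg2_cont q hq
    have e7 : ∀ q ∈ Set.Icc t T, (∫ r in q..T, f2 r q) = Ub t q (∫ r in q..T, g2 q r) := by
      intro q hq
      have h1 : Set.EqOn (fun r => f2 r q) (fun r => Ub t q (g2 q r)) (Set.uIcc q T) := by
        intro r hr
        rw [Set.uIcc_of_le hq.2] at hr
        have hcomp := hUbcomp t q r ht.1 hq.1 hr.1 hr.2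
        simp only [hf2_def, hg2_def]
        rw [hcomp]
        rfl
      rw [intervalIntegral.integral_congr h1]
      exact (Ub t q).intervalIntegral_comp_comm (hg2_int q hq)
    have e8 : ∀ q ∈ Set.Icc t T,
        P q (yv q) = Ub q T (G (Ωl T q (yv q))) + ∫ r in q..T, g2 q r :=
      fun q hq => hPspec q ⟨ht.1.trans hq.1, hq.2⟩ (yv q)
    have hfirst_cont : ContinuousOn
        (fun q => Ub t q (Ub q T (G (Ωl T q (yv q))))) (Set.Icc t T) := by
      refine sc_comp (A := fun q => Ub t q) (M := KUb)
        (fun q hq => le_max_of_le_left (hUbbdd t q ht.1 hq.1 hq.2))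
        (fun y => hUbsc₂ y t ht) ?_
      refine sc_comp (A := fun q => Ub q T) (M := KUb)
        (fun q hq => le_max_of_le_left (hUbbdd q T (ht.1.trans hq.1) hq.2 le_rfl))
        (fun y => (hUbsc₁ y T ⟨hT, le_rfl⟩).mono (hsub ht)) ?_
      refine G.continuous.comp_continuousOn ?_
      refine sc_comp (A := fun q => Ωl T q) (M := KW)
        (fun q hq => le_max_of_le_left (hΩlbdd q T (ht.1.trans hq.1) hq.2 le_rfl))
        (fun z => (hΩlsc₂ z T ⟨hT, le_rfl⟩).mono (hsub ht)) hyv_cont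
    have hfirst_int : IntervalIntegrable
        (fun q => Ub t q (Ub q T (G (Ωl T q (yv q))))) volume t T := by
      apply ContinuousOn.intervalIntegrable
      rw [Set.uIcc_of_le ht.2]
      exact hfirst_cont
    have hPy_cont : ContinuousOn (fun q => Ub t q (P q (yv q))) (Set.Icc t T) := by
      refine sc_comp (A := fun q => Ub t q) (M := KUb)
        (fun q hq => le_max_of_le_left (hUbbdd t q ht.1 hq.1 hq.2))
        (fun y => hUbsc₂ y t ht) ?_
      refine sc_comp (A := fun q => P q) (M := C₀) (fun q hq => hPbdd q (hsub ht hq))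
        (fun z => (hPcont z).mono (hsub ht)) hyv_cont
    have hPy_int : IntervalIntegrable (fun q => Ub t q (P q (yv q))) volume t T := by
      apply ContinuousOn.intervalIntegrable
      rw [Set.uIcc_of_le ht.2]
      exact hPy_cont
    have hsecond_eq : ∀ q ∈ Set.Icc t T,
        Ub t q (P q (yv q)) = Ub t q (Ub q T (G (Ωl T q (yv q))))
          + Ub t q (∫ r in q..T, g2 q r) := by
      intro q hq
      rw [e8 q hq, map_add]
    have hsecond_int : IntervalIntegrable
        (fun q => Ub t q (∫ r in q..T, g2 q r)) volume t T := by
      refine (hPy_int.sub hfirst_int).congr_Icc ht.2 (fun q hq => ?_)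
      rw [hsecond_eq q hq]
      abel
    have e9 : (∫ q in t..T, Ub t q (P q (yv q)))
        = (∫ q in t..T, Ub t q (Ub q T (G (Ωl T q (yv q)))))
          + ∫ q in t..T, Ub t q (∫ r in q..T, g2 q r) := by
      rw [← intervalIntegral.integral_add hfirst_int hsecond_int]
      apply intervalIntegral.integral_congr
      intro q hq
      rw [Set.uIcc_of_le ht.2] at hq
      exact hsecond_eq q hq
    have e10 : (∫ q in t..T, Ub t T (G (Ωl T q (yv q))))
        = ∫ q in t..T, Ub t q (Ub q T (G (Ωl T q (yv q)))) := by
      apply intervalIntegral.integral_congr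
      intro q hq
      rw [Set.uIcc_of_le ht.2] at hq
      rw [hUbcomp t q T ht.1 hq.1 hq.2 le_rfl]
      rfl
    have e11 : (∫ q in t..T, ∫ r in q..T, f2 r q)
        = ∫ q in t..T, Ub t q (∫ r in q..T, g2 q r) := by
      apply intervalIntegral.integral_congr
      intro q hq
      rw [Set.uIcc_of_le ht.2] at hq
      exact e7 q hq
    have e12 : (∫ r in t..T, Ub t r (Q12 r (Ul r t x) - P r (yv r)))
        = (∫ r in t..T, Ub t r (Q12 r (Ul r t x))) - ∫ r in t..T, Ub t r (P r (yv r)) := by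
      rw [← intervalIntegral.integral_sub hA_int hPy_int]
      apply intervalIntegral.integral_congr
      intro r hr
      simp only [map_sub]
    calc P t x
        = Ub t T (G (Ωl T t x)) + ∫ r in t..T, Ub t r (Q12 r (Ωl r t x)) := hPspec t ht x
      _ = (Ub t T (G (Ul T t x)) - ∫ q in t..T, Ub t T (G (Ωl T q (yv q))))
          + ((∫ r in t..T, Ub t r (Q12 r (Ul r t x)))
            - ∫ r in t..T, ∫ q in t..r, f2 r q) := by rw [← e3, ← e5]
      _ = Ub t T (G (Ul T t x)) +
          ((∫ r in t..T, Ub t r (Q12 r (Ul r t x)))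
            - ∫ r in t..T, Ub t r (P r (yv r))) := by
          rw [e10, e6, e11, e9]
          abel
      _ = Ub t T (G (Ul T t x)) +
          ∫ r in t..T, Ub t r (Q12 r (Ul r t x) - P r (yv r)) := by rw [e12]
  -- Part 4: uniqueness
  have huniq : ∀ Q : ℝ → X₁ →L[ℝ] X₂,
      (∀ x : X₁, ContinuousOn (fun t => Q t x) (Set.Icc 0 T)) →
      (∀ t ∈ Set.Icc 0 T, ∀ x : X₁,
        Q t x = Ub t T (G (Ul T t x)) +
          ∫ r in t..T, Ub t r (Q12 r (Ul r t x) - Q r (Q1 r (Ul r t x)))) →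
      ∀ t ∈ Set.Icc 0 T, Q t = P t := by
    intro Q hQcont hQeq
    obtain ⟨MQ, hMQ0, hMQ⟩ := sc_bound isCompact_Icc hQcont
    have hMD0 : (0:ℝ) ≤ MQ + C₀ := add_nonneg hMQ0 hC₀0
    have hK0 : (0:ℝ) ≤ KUb * (M1 * KUl) := mul_nonneg hKUb0 (mul_nonneg hM1_0 hKUl0)
    have hyvc : ∀ t ∈ Set.Icc (0:ℝ) T, ∀ x : X₁,
        ContinuousOn (fun q => Q1 q (Ul q t x)) (Set.Icc t T) := by
      intro t ht x
      refine sc_comp (A := fun q => Q1 q) (M := M1) (fun q hq => hM1 q (hsub ht hq))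
        (fun z => (hQ1sc z).mono (hsub ht)) ?_
      exact hUlsc₁ x t ht
    have hDcont : ∀ t ∈ Set.Icc (0:ℝ) T, ∀ x : X₁, ContinuousOn
        (fun r => Ub t r (P r (Q1 r (Ul r t x)) - Q r (Q1 r (Ul r t x)))) (Set.Icc t T) := by
      intro t ht x
      refine sc_comp (A := fun r => Ub t r) (M := KUb)
        (fun r hr => le_max_of_le_left (hUbbdd t r ht.1 hr.1 hr.2))
        (fun y => hUbsc₂ y t ht) ?_
      refine ContinuousOn.sub ?_ ?_
      · refine sc_comp (A := fun r => P r) (M := C₀) (fun r hr => hPbdd r (hsub ht hr))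
          (fun z => (hPcont z).mono (hsub ht)) (hyvc t ht x)
      · refine sc_comp (A := fun r => Q r) (M := MQ) (fun r hr => hMQ r (hsub ht hr))
          (fun z => (hQcont z).mono (hsub ht)) (hyvc t ht x)
    have hDeq : ∀ t ∈ Set.Icc (0:ℝ) T, ∀ x : X₁,
        Q t x - P t x
          = ∫ r in t..T, Ub t r (P r (Q1 r (Ul r t x)) - Q r (Q1 r (Ul r t x))) := by
      intro t ht x
      have hIQ_cont : ContinuousOn
          (fun r => Ub t r (Q12 r (Ul r t x) - Q r (Q1 r (Ul r t x)))) (Set.Icc t T) := by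
        refine sc_comp (A := fun r => Ub t r) (M := KUb)
          (fun r hr => le_max_of_le_left (hUbbdd t r ht.1 hr.1 hr.2))
          (fun y => hUbsc₂ y t ht) ?_
        refine ContinuousOn.sub ?_ ?_
        · refine sc_comp (A := fun r => Q12 r) (M := M12) (fun r hr => hM12 r (hsub ht hr))
            (fun y => (hQ12sc y).mono (hsub ht)) ?_
          exact hUlsc₁ x t ht
        · refine sc_comp (A := fun r => Q r) (M := MQ) (fun r hr => hMQ r (hsub ht hr))
            (fun z => (hQcont z).mono (hsub ht)) (hyvc t ht x)
      have hIP_cont : ContinuousOn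
          (fun r => Ub t r (Q12 r (Ul r t x) - P r (Q1 r (Ul r t x)))) (Set.Icc t T) := by
        refine sc_comp (A := fun r => Ub t r) (M := KUb)
          (fun r hr => le_max_of_le_left (hUbbdd t r ht.1 hr.1 hr.2))
          (fun y => hUbsc₂ y t ht) ?_
        refine ContinuousOn.sub ?_ ?_
        · refine sc_comp (A := fun r => Q12 r) (M := M12) (fun r hr => hM12 r (hsub ht hr))
            (fun y => (hQ12sc y).mono (hsub ht)) ?_
          exact hUlsc₁ x t ht
        · refine sc_comp (A := fun r => P r) (M := C₀) (fun r hr => hPbdd r (hsub ht hr))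
            (fun z => (hPcont z).mono (hsub ht)) (hyvc t ht x)
      have hIQ_int : IntervalIntegrable
          (fun r => Ub t r (Q12 r (Ul r t x) - Q r (Q1 r (Ul r t x)))) volume t T := by
        apply ContinuousOn.intervalIntegrable
        rw [Set.uIcc_of_le ht.2]
        exact hIQ_cont
      have hIP_int : IntervalIntegrable
          (fun r => Ub t r (Q12 r (Ul r t x) - P r (Q1 r (Ul r t x)))) volume t T := by
        apply ContinuousOn.intervalIntegrable
        rw [Set.uIcc_of_le ht.2]
        exact hIP_cont
      have h1 : Q t x - P t x
          = ∫ r in t..T, (Ub t r (Q12 r (Ul r t x) - Q r (Q1 r (Ul r t x)))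
            - Ub t r (Q12 r (Ul r t x) - P r (Q1 r (Ul r t x)))) := by
        rw [hQeq t ht x, heq t ht x, intervalIntegral.integral_sub hIQ_int hIP_int]
        abel
      rw [h1]
      apply intervalIntegral.integral_congr
      intro r hr
      simp only [map_sub]
      abel
    have hiter : ∀ n : ℕ, ∀ t ∈ Set.Icc (0:ℝ) T, ∀ x : X₁,
        ‖Q t x - P t x‖
          ≤ (MQ + C₀) * (KUb * (M1 * KUl) * (T - t)) ^ n / (n.factorial : ℝ) * ‖x‖ := by
      intro n
      induction n with
      | zero =>
        intro t ht x
        have hbase : ‖Q t x - P t x‖ ≤ (MQ + C₀) * ‖x‖ := by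
          calc ‖Q t x - P t x‖ ≤ ‖Q t x‖ + ‖P t x‖ := norm_sub_le _ _
            _ ≤ MQ * ‖x‖ + C₀ * ‖x‖ := add_le_add
                (((Q t).le_opNorm x).trans
                  (mul_le_mul_of_nonneg_right (hMQ t ht) (norm_nonneg x)))
                (bP t ht x)
            _ = (MQ + C₀) * ‖x‖ := by ring
        simpa using hbase
      | succ n ih =>
        intro t ht x
        have hfac : ((n.factorial : ℝ)) ≠ 0 := Nat.cast_ne_zero.mpr n.factorial_ne_zero
        have hb : ∀ r ∈ Set.Icc t T,
            ‖Ub t r (P r (Q1 r (Ul r t x)) - Q r (Q1 r (Ul r t x)))‖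
            ≤ (MQ + C₀) * (KUb * (M1 * KUl)) ^ (n + 1) * (T - r) ^ n
                / (n.factorial : ℝ) * ‖x‖ := by
          intro r hr
          have hyb : ‖Q1 r (Ul r t x)‖ ≤ M1 * (KUl * ‖x‖) := by
            refine (bQ1 r (hsub ht hr) _).trans ?_
            exact mul_le_mul_of_nonneg_left (bUl t r ht.1 hr.1 hr.2 x) hM1_0
          have hD := ih r ⟨ht.1.trans hr.1, hr.2⟩ (Q1 r (Ul r t x))
          have hpow0 : (0:ℝ) ≤ (MQ + C₀) * (KUb * (M1 * KUl) * (T - r)) ^ n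
              / (n.factorial : ℝ) := by
            apply div_nonneg _ (Nat.cast_nonneg _)
            exact mul_nonneg hMD0 (pow_nonneg (mul_nonneg hK0 (sub_nonneg.mpr hr.2)) n)
          calc ‖Ub t r (P r (Q1 r (Ul r t x)) - Q r (Q1 r (Ul r t x)))‖
              ≤ KUb * ‖P r (Q1 r (Ul r t x)) - Q r (Q1 r (Ul r t x))‖ :=
                bUb t r ht.1 hr.1 hr.2 _
            _ = KUb * ‖Q r (Q1 r (Ul r t x)) - P r (Q1 r (Ul r t x))‖ := by
                rw [norm_sub_rev]
            _ ≤ KUb * ((MQ + C₀) * (KUb * (M1 * KUl) * (T - r)) ^ n / (n.factorial : ℝ)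
                * ‖Q1 r (Ul r t x)‖) := mul_le_mul_of_nonneg_left hD hKUb0
            _ ≤ KUb * ((MQ + C₀) * (KUb * (M1 * KUl) * (T - r)) ^ n / (n.factorial : ℝ)
                * (M1 * (KUl * ‖x‖))) := by
                exact mul_le_mul_of_nonneg_left
                  (mul_le_mul_of_nonneg_left hyb hpow0) hKUb0
            _ = (MQ + C₀) * (KUb * (M1 * KUl)) ^ (n + 1) * (T - r) ^ n
                / (n.factorial : ℝ) * ‖x‖ := by
                rw [mul_pow, pow_succ]
                field_simp
        rw [hDeq t ht x]
        have h2 : ‖∫ r in t..T, Ub t r (P r (Q1 r (Ul r t x)) - Q r (Q1 r (Ul r t x)))‖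
            ≤ ∫ r in t..T, (MQ + C₀) * (KUb * (M1 * KUl)) ^ (n + 1) * (T - r) ^ n
                / (n.factorial : ℝ) * ‖x‖ := by
          refine (intervalIntegral.norm_integral_le_integral_norm ht.2).trans ?_
          refine intervalIntegral.integral_mono_on ht.2 ?_ ?_ hb
          · apply ContinuousOn.intervalIntegrable
            rw [Set.uIcc_of_le ht.2]
            exact (hDcont t ht x).norm
          · apply Continuous.intervalIntegrable
            fun_prop
        have h3 : (∫ r in t..T, (MQ + C₀) * (KUb * (M1 * KUl)) ^ (n + 1) * (T - r) ^ n
              / (n.factorial : ℝ) * ‖x‖)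
            = (MQ + C₀) * (KUb * (M1 * KUl) * (T - t)) ^ (n + 1)
              / ((n + 1).factorial : ℝ) * ‖x‖ := by
          have hrw : (fun r : ℝ => (MQ + C₀) * (KUb * (M1 * KUl)) ^ (n + 1) * (T - r) ^ n
              / (n.factorial : ℝ) * ‖x‖)
              = fun r : ℝ => ((MQ + C₀) * (KUb * (M1 * KUl)) ^ (n + 1)
                / (n.factorial : ℝ) * ‖x‖) * (T - r) ^ n := by
            funext r
            ring
          rw [hrw, intervalIntegral.integral_const_mul]
          have h4 : (∫ r in t..T, (T - r) ^ n) = (T - t) ^ (n + 1) / (n + 1) := by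
            rw [intervalIntegral.integral_comp_sub_left (fun u => u ^ n) T]
            simp only [sub_self]
            rw [integral_pow]
            simp [zero_pow]
          rw [h4]
          have hfac1 : (((n + 1).factorial : ℝ)) = (n + 1) * (n.factorial : ℝ) := by
            rw [Nat.factorial_succ]
            push_cast
            ring
          have hn1 : ((n : ℝ) + 1) ≠ 0 := by positivity
          rw [hfac1,
            show (KUb * (M1 * KUl) * (T - t)) ^ (n + 1)
              = (KUb * (M1 * KUl)) ^ (n + 1) * (T - t) ^ (n + 1) from mul_pow _ _ _]
          simp only [div_eq_mul_inv, mul_inv]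
          ring
        exact h2.trans (le_of_eq h3)
    intro t ht
    ext x
    have hlim : Filter.Tendsto
        (fun n : ℕ => (MQ + C₀) * (KUb * (M1 * KUl) * (T - t)) ^ n / (n.factorial : ℝ) * ‖x‖)
        Filter.atTop (𝓝 0) := by
      have h1 := FloorSemiring.tendsto_pow_div_factorial_atTop (KUb * (M1 * KUl) * (T - t))
      have h2 : (fun n : ℕ => (MQ + C₀) * (KUb * (M1 * KUl) * (T - t)) ^ n
          / (n.factorial : ℝ) * ‖x‖)
          = fun n : ℕ => ((MQ + C₀) * ‖x‖)
            * ((KUb * (M1 * KUl) * (T - t)) ^ n / (n.factorial : ℝ)) := by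
        funext n
        ring
      rw [h2]
      simpa using h1.const_mul ((MQ + C₀) * ‖x‖)
    have hle : ‖Q t x - P t x‖ ≤ 0 := ge_of_tendsto' hlim (fun n => hiter n t ht x)
    have hzero : Q t x - P t x = 0 := norm_le_zero_iff.mp hle
    exact sub_eq_zero.mp hzero
  exact ⟨P, hPcont, hPspec, heq, huniq⟩
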